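/- Let p be a prime, a ∈ ℤ_p with a ≠ 1, and let φ : ℤ_p → ℤ_p be the endomorphism φ(x) = a·x. Then the Reidemeister number of φ is finite and equals ‖1 − a‖_p^{-1} = p^{v(1−a)}, where v(1−a) is the p-adic valuation of 1 − a; that is, the number of φ-conjugacy classes equals the index of (1−a)ℤ_p in ℤ_p, which is p^{v(1−a)}. -/

import Mathlib

/-- For the endomorphism `x ↦ a·x` of `ℤ_p` with `a ≠ 1`, the Reidemeister number
is finite and equals `‖1 - a‖⁻¹ = p^(v(1-a))`, which is the index of `(1-a)ℤ_p`
in `ℤ_p`. -/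
theorem reidemeister_number_padicInt (p : ℕ) [Fact p.Prime] (a : ℤ_[p]) (ha : a ≠ 1) :
    Finite (Quot (fun x y : ℤ_[p] => ∃ b : ℤ_[p], y = x + b - a * b)) ∧
    (Nat.card (Quot (fun x y : ℤ_[p] => ∃ b : ℤ_[p], y = x + b - a * b)) : ℝ) =
      ‖(1 : ℤ_[p]) - a‖⁻¹ ∧
    Nat.card (Quot (fun x y : ℤ_[p] => ∃ b : ℤ_[p], y = x + b - a * b)) =
      p ^ ((1 - a).valuation) ∧
    Nat.card (Quot (fun x y : ℤ_[p] => ∃ b : ℤ_[p], y = x + b - a * b)) =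
      Nat.card (ℤ_[p] ⧸ Ideal.span {(1 : ℤ_[p]) - a}) := by
  have hc : (1 : ℤ_[p]) - a ≠ 0 := sub_ne_zero.mpr (Ne.symm ha)
  set c : ℤ_[p] := 1 - a with hcdef
  set n : ℕ := c.valuation with hn
  have hvn : (n : ℤ) = c.valuation := rfl
  set I : Ideal ℤ_[p] := Ideal.span {c} with hI
  -- `c` is associated to `p ^ n`
  have hassoc : Associated ((p : ℤ_[p]) ^ n) c := by
    refine ⟨PadicInt.unitCoeff hc, ?_⟩
    have hspec := (PadicInt.unitCoeff_spec hc).symm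
    have hnatAbs : c.valuation = n := rfl
    rw [hnatAbs] at hspec
    rw [mul_comm] at hspec
    exact hspec
  have hspan : I = Ideal.span {(p : ℤ_[p]) ^ n} := by
    rw [hI, Ideal.span_singleton_eq_span_singleton]
    exact hassoc.symm
  -- quotient by `span {p^n}` is `ZMod (p^n)`
  have hsurj : Function.Surjective (PadicInt.toZModPow (p := p) n) := by
    intro x
    obtain ⟨k, rfl⟩ := ZMod.intCast_surjective x
    exact ⟨k, map_intCast _ k⟩
  have e2 : (ℤ_[p] ⧸ I) ≃+* ZMod (p ^ n) :=
    (Ideal.quotEquivOfEq (by rw [hspan, ← PadicInt.ker_toZModPow])).trans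
      (RingHom.quotientKerEquivOfSurjective hsurj)
  have hcardq : Nat.card (ℤ_[p] ⧸ I) = p ^ n := by
    rw [Nat.card_congr e2.toEquiv, Nat.card_zmod]
  have hfinq : Finite (ℤ_[p] ⧸ I) := Finite.of_equiv _ e2.symm.toEquiv
  -- bijection between the quotient by twisted conjugacy and `ℤ_[p] ⧸ I`
  let f : Quot (fun x y : ℤ_[p] => ∃ b : ℤ_[p], y = x + b - a * b) → ℤ_[p] ⧸ I :=
    Quot.lift (Ideal.Quotient.mk I) (by
      rintro x y ⟨b, rfl⟩
      rw [Ideal.Quotient.eq]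
      exact Ideal.mem_span_singleton.mpr ⟨-b, by rw [hcdef]; ring⟩)
  have hfbij : Function.Bijective f := by
    constructor
    · refine Quot.ind fun x => Quot.ind fun y h => ?_
      have hxy : x - y ∈ I := Ideal.Quotient.eq.mp h
      obtain ⟨b, hb⟩ := Ideal.mem_span_singleton.mp hxy
      refine Quot.sound ⟨-b, ?_⟩
      rw [hcdef] at hb
      linear_combination -hb
    · intro z
      obtain ⟨x, rfl⟩ := Ideal.Quotient.mk_surjective z
      exact ⟨Quot.mk _ x, rfl⟩
  have hfin : Finite (Quot (fun x y : ℤ_[p] => ∃ b : ℤ_[p], y = x + b - a * b)) :=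
    Finite.of_injective f hfbij.1
  have hcard : Nat.card (Quot (fun x y : ℤ_[p] => ∃ b : ℤ_[p], y = x + b - a * b)) =
      Nat.card (ℤ_[p] ⧸ I) := Nat.card_eq_of_bijective f hfbij
  refine ⟨hfin, ?_, ?_, ?_⟩
  · rw [hcard, hcardq]
    rw [PadicInt.norm_eq_zpow_neg_valuation hc, ← hvn]
    push_cast
    rw [← zpow_natCast, ← zpow_neg, neg_neg]
  · rw [hcard, hcardq]
  · rw [hcard]
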